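/- Let V be a real vector space with finrank ℝ V = 2n and n ≥ 3, and let ω ∈ ⋀²V satisfy ωⁿ ≠ 0. If β ∈ ⋀²V satisfies β·ω = 0 in the exterior algebra, then β = 0. (This is the pointwise fact, dα∧J = 0 ⟹ dα = 0, showing that the Lee form of a conformally symplectic manifold of dimension at least 6 is closed.) -/

import Mathlib

open ExteriorAlgebra

namespace LeeAux

variable {V : Type*} [AddCommGroup V] [Module ℝ V]

/-- Contraction (interior product) with a linear functional, on the exterior algebra. -/
noncomputable def ctr (f : Module.Dual ℝ V) :
    ExteriorAlgebra ℝ V →ₗ[ℝ] ExteriorAlgebra ℝ V :=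
  CliffordAlgebra.contractLeft (Q := (0 : QuadraticForm ℝ V)) f

lemma ctr_ι (f : Module.Dual ℝ V) (a : V) :
    ctr f (ι ℝ a) = algebraMap ℝ (ExteriorAlgebra ℝ V) (f a) :=
  CliffordAlgebra.contractLeft_ι _ _ _

lemma ctr_ι_mul (f : Module.Dual ℝ V) (a : V) (x : ExteriorAlgebra ℝ V) :
    ctr f (ι ℝ a * x) = f a • x - ι ℝ a * ctr f x :=
  CliffordAlgebra.contractLeft_ι_mul _ _ _

lemma ctr_algebraMap (f : Module.Dual ℝ V) (r : ℝ) :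
    ctr f (algebraMap ℝ (ExteriorAlgebra ℝ V) r) = 0 :=
  CliffordAlgebra.contractLeft_algebraMap _ _ _

lemma ι_mul_ι_neg (a b : V) : ι ℝ a * ι ℝ b = -(ι ℝ b * ι ℝ a) :=
  eq_neg_of_add_eq_zero_left (ι_add_mul_swap a b)

lemma mem_sq {ω : ExteriorAlgebra ℝ V} (hω : ω ∈ ⋀[ℝ]^2 V) :
    ω ∈ LinearMap.range (ι ℝ : V →ₗ[ℝ] ExteriorAlgebra ℝ V) *
      LinearMap.range (ι ℝ : V →ₗ[ℝ] ExteriorAlgebra ℝ V) := by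
  rwa [show (⋀[ℝ]^2 V) = LinearMap.range (ι ℝ : V →ₗ[ℝ] ExteriorAlgebra ℝ V) *
    LinearMap.range (ι ℝ : V →ₗ[ℝ] ExteriorAlgebra ℝ V) from pow_two _] at hω

/-- Degree-2 elements are central. -/
lemma comm_deg2 {ω : ExteriorAlgebra ℝ V} (hω : ω ∈ ⋀[ℝ]^2 V)
    (x : ExteriorAlgebra ℝ V) : ω * x = x * ω := by
  refine Submodule.mul_induction_on (mem_sq hω) ?_ ?_
  · rintro _ ⟨a, rfl⟩ _ ⟨b, rfl⟩
    induction x using ExteriorAlgebra.induction with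
    | algebraMap r => exact (Algebra.commutes r _).symm
    | ι m =>
      rw [mul_assoc, ι_mul_ι_neg b m, mul_neg, ← mul_assoc, ι_mul_ι_neg a m,
        neg_mul, neg_neg, mul_assoc]
    | mul x y hx hy => rw [← mul_assoc, hx, mul_assoc, hy, ← mul_assoc]
    | add x y hx hy => rw [mul_add, add_mul, hx, hy]
  · intro x y hx hy
    rw [add_mul, mul_add, hx, hy]

/-- Contraction is a derivation on products with a degree-2 left factor. -/
lemma ctr_deg2_mul (f : Module.Dual ℝ V) {β : ExteriorAlgebra ℝ V}
    (hβ : β ∈ ⋀[ℝ]^2 V) (y : ExteriorAlgebra ℝ V) :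
    ctr f (β * y) = ctr f β * y + β * ctr f y := by
  refine Submodule.mul_induction_on (mem_sq hβ) ?_ ?_
  · rintro _ ⟨a, rfl⟩ _ ⟨b, rfl⟩
    rw [mul_assoc, ctr_ι_mul, ctr_ι_mul, ctr_ι_mul, ctr_ι]
    simp only [mul_sub, sub_mul, smul_mul_assoc, mul_smul_comm, mul_assoc,
      Algebra.algebraMap_eq_smul_one, mul_one, smul_sub]
    abel
  · intro x y hx hy
    simp only [add_mul, map_add, hx, hy]
    abel

/-- Contraction sends degree 2 to degree 1. -/
lemma ctr_deg2_mem (f : Module.Dual ℝ V) {β : ExteriorAlgebra ℝ V}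
    (hβ : β ∈ ⋀[ℝ]^2 V) :
    ctr f β ∈ LinearMap.range (ι ℝ : V →ₗ[ℝ] ExteriorAlgebra ℝ V) := by
  refine Submodule.mul_induction_on (mem_sq hβ) ?_ ?_
  · rintro _ ⟨a, rfl⟩ _ ⟨b, rfl⟩
    refine ⟨f a • b - f b • a, ?_⟩
    rw [ctr_ι_mul, ctr_ι]
    simp [Algebra.algebraMap_eq_smul_one, mul_smul_comm, mul_one, sub_eq_add_neg]
  · intro x y hx hy
    rw [map_add]; exact add_mem hx hy

lemma ctr_pow (f : Module.Dual ℝ V) {ω : ExteriorAlgebra ℝ V}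
    (hω : ω ∈ ⋀[ℝ]^2 V) (k : ℕ) :
    ctr f (ω ^ (k + 1)) = ((k : ℝ) + 1) • (ctr f ω * ω ^ k) := by
  induction k with
  | zero => simp
  | succ k ih =>
    rw [pow_succ', ctr_deg2_mul f hω, ih, mul_smul_comm, ← mul_assoc,
      comm_deg2 hω (ctr f ω), mul_assoc, ← pow_succ']
    push_cast
    module

/-- Euler identity: summing `ι (b i) * (contraction by the i-th coordinate)` acts as
multiplication by the degree on `⋀ᵏV`. -/
lemma euler {N : ℕ} (b : Module.Basis (Fin N) ℝ V) {k : ℕ} {x : ExteriorAlgebra ℝ V}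
    (hx : x ∈ ⋀[ℝ]^k V) :
    ∑ i, ι ℝ (b i) * ctr (b.coord i) x = (k : ℝ) • x := by
  induction hx using Submodule.pow_induction_on_left' with
  | algebraMap r => simp [ctr_algebraMap]
  | add x y i hx hy ihx ihy =>
    simp only [map_add, mul_add, Finset.sum_add_distrib, ihx, ihy, smul_add]
  | mem_mul m hm i x hx ih =>
    obtain ⟨m₀, rfl⟩ := hm
    have step : ∀ j : Fin N, ι ℝ (b j) * ctr (b.coord j) (ι ℝ m₀ * x) =
        b.coord j m₀ • (ι ℝ (b j) * x) + ι ℝ m₀ * (ι ℝ (b j) * ctr (b.coord j) x) := by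
      intro j
      rw [ctr_ι_mul, mul_sub, mul_smul_comm, ← mul_assoc, ι_mul_ι_neg (b j) m₀,
        neg_mul, sub_neg_eq_add, mul_assoc]
    calc ∑ j, ι ℝ (b j) * ctr (b.coord j) (ι ℝ m₀ * x)
        = (∑ j, b.coord j m₀ • (ι ℝ (b j) * x))
          + ι ℝ m₀ * ∑ j, ι ℝ (b j) * ctr (b.coord j) x := by
          simp only [step, Finset.sum_add_distrib, Finset.mul_sum]
      _ = ι ℝ m₀ * x + ι ℝ m₀ * ((i : ℝ) • x) := by
          rw [ih]
          congr 1
          simp_rw [← smul_mul_assoc]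
          rw [← Finset.sum_mul]
          congr 1
          simp_rw [Module.Basis.coord_apply, ← LinearMap.map_smul, ← map_sum, b.sum_repr]
      _ = ((i + 1 : ℕ) : ℝ) • (ι ℝ m₀ * x) := by
          rw [mul_smul_comm]
          push_cast
          module

end LeeAux

set_option maxHeartbeats 1000000 in
/-- If `V` has dimension `2n` with `n ≥ 3` and `ω ∈ ⋀²V` satisfies `ωⁿ ≠ 0`, then any
`β ∈ ⋀²V` with `β * ω = 0` in the exterior algebra vanishes.  (Pointwise form of the fact
that the Lee form of a conformally symplectic manifold of dimension at least 6 is closed.) -/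
theorem lee_form_closed_pointwise
    {V : Type*} [AddCommGroup V] [Module ℝ V] [FiniteDimensional ℝ V]
    {n : ℕ} (hn : 3 ≤ n) (hdim : Module.finrank ℝ V = 2 * n)
    (ω : ExteriorAlgebra ℝ V) (hω : ω ∈ ⋀[ℝ]^2 V) (hnd : ω ^ n ≠ 0)
    (β : ExteriorAlgebra ℝ V) (hβ : β ∈ ⋀[ℝ]^2 V) (h : β * ω = 0) :
    β = 0 := by
  classical
  obtain ⟨m, rfl⟩ : ∃ m, n = m + 2 := ⟨n - 2, by omega⟩
  have hm1 : 1 ≤ m := by omega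
  have comm : ∀ x : ExteriorAlgebra ℝ V, ω * x = x * ω := LeeAux.comm_deg2 hω
  have hco : ∀ (k : ℕ) (x : ExteriorAlgebra ℝ V), ω ^ k * x = x * ω ^ k :=
    fun k x => (Commute.pow_left (comm x) k)
  have hβω : ∀ k : ℕ, β * ω ^ (k + 1) = 0 := by
    intro k
    rw [pow_succ', ← mul_assoc, h, zero_mul]
  -- Step 1: all contractions of β vanish.
  have key : ∀ f : Module.Dual ℝ V, LeeAux.ctr f β = 0 := by
    intro f
    obtain ⟨a₀, ha⟩ := LeeAux.ctr_deg2_mem f hβ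
    obtain ⟨u₀, hu⟩ := LeeAux.ctr_deg2_mem f hω
    set a := LeeAux.ctr f β with hadef
    set u := LeeAux.ctr f ω with hudef
    -- contraction of β * ω = 0
    have h2 : a * ω + β * u = 0 := by
      have e := congrArg (LeeAux.ctr f) h
      rwa [LeeAux.ctr_deg2_mul f hβ, map_zero] at e
    have haω : a * ω = -(β * u) := eq_neg_of_add_eq_zero_left h2
    -- Key 1: β * u * ω^m = 0 (here n ≥ 3 is used)
    have key1 : β * (u * ω ^ m) = 0 := by
      have e2 := congrArg (LeeAux.ctr f) (hβω m)
      rw [map_zero, LeeAux.ctr_deg2_mul f hβ, LeeAux.ctr_pow f hω m] at e2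
      have haw : a * ω ^ (m + 1) = -(β * (u * ω ^ m)) := by
        rw [pow_succ', ← mul_assoc, haω, neg_mul, mul_assoc]
      rw [haw, mul_smul_comm] at e2
      have e4 : (m : ℝ) • (β * (u * ω ^ m)) = 0 := by
        calc (m : ℝ) • (β * (u * ω ^ m))
            = -(β * (u * ω ^ m)) + ((m : ℝ) + 1) • (β * (u * ω ^ m)) := by module
          _ = 0 := e2
      have hmne : (m : ℝ) ≠ 0 := Nat.cast_ne_zero.mpr (by omega)
      exact (smul_eq_zero.mp e4).resolve_left hmne
    -- Step 2: for every dual vector g, g a₀ = 0.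
    have ha0 : ∀ g : Module.Dual ℝ V, g a₀ = 0 := by
      intro g
      set b := LeeAux.ctr g β with hbdef
      set v := LeeAux.ctr g ω with hvdef
      obtain ⟨v₀, hv⟩ := LeeAux.ctr_deg2_mem g hω
      have h2g : b * ω + β * v = 0 := by
        have e := congrArg (LeeAux.ctr g) h
        rwa [LeeAux.ctr_deg2_mul g hβ, map_zero] at e
      have hbω : b * ω = -(β * v) := eq_neg_of_add_eq_zero_left h2g
      -- contraction of h2 by g
      have e3 : g a₀ • ω - a * v + (b * u + g u₀ • β) = 0 := by
        have e := congrArg (LeeAux.ctr g) h2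
        rw [map_add, map_zero, ← ha, LeeAux.ctr_ι_mul, ha,
          LeeAux.ctr_deg2_mul g hβ, ← hu, LeeAux.ctr_ι, hu] at e
        rwa [show β * algebraMap ℝ (ExteriorAlgebra ℝ V) (g u₀) = g u₀ • β by
          rw [Algebra.algebraMap_eq_smul_one, mul_smul_comm, mul_one]] at e
      -- key 2
      have key2 : β * (u * (v * ω ^ m)) = 0 := by
        rw [show v * ω ^ m = ω ^ m * v from (hco m v).symm, ← mul_assoc, ← mul_assoc,
          mul_assoc β u _, key1, zero_mul]
      -- move ω through
      have hmove : ∀ z : ExteriorAlgebra ℝ V, z * ω ^ (m + 1) = ω * (z * ω ^ m) := by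
        intro z
        rw [pow_succ', ← mul_assoc, ← comm z, mul_assoc]
      have claimA : a * (v * ω ^ (m + 1)) = 0 := by
        rw [hmove v, ← mul_assoc, haω, neg_mul, mul_assoc, key2, neg_zero]
      have claimB : b * (u * ω ^ (m + 1)) = 0 := by
        have hvu : v * (u * ω ^ m) = -(u * (v * ω ^ m)) := by
          rw [← mul_assoc, ← hu, hvdef, ← hv, LeeAux.ι_mul_ι_neg v₀ u₀, neg_mul,
            mul_assoc, hu, hv, ← hvdef]
        rw [hmove u, ← mul_assoc, hbω, neg_mul, mul_assoc, hvu, mul_neg, key2,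
          neg_zero, neg_zero]
      have T := congrArg (fun z => z * ω ^ (m + 1)) e3
      simp only [add_mul, sub_mul, smul_mul_assoc, zero_mul, mul_assoc] at T
      rw [claimA, claimB, hβω m, smul_zero, ← pow_succ'] at T
      simp only [sub_zero, add_zero, zero_add] at T
      have := smul_eq_zero.mp T
      exact this.resolve_right (by simpa using hnd)
    have : a₀ = 0 := (Module.forall_dual_apply_eq_zero_iff ℝ a₀).mp ha0
    rw [← ha, this, map_zero]
  -- Step 3: Euler identity forces β = 0.
  have bV := Module.finBasis ℝ V
  have heuler := LeeAux.euler bV hβ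
  simp only [key, mul_zero, Finset.sum_const_zero] at heuler
  have h2β : ((2 : ℕ) : ℝ) • β = 0 := heuler.symm
  rcases smul_eq_zero.mp h2β with h' | h'
  · norm_num at h'
  · exact h'
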